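/- Let Q > 3 and M > 1 be integers with gcd(Q, M) = 1, and set N = QM. Then the following are equivalent: (a) there exist integers x, y, z, w and a complex number τ with positive imaginary part such that Q²xw − Nyz = Q and Qx·τ + y = (Nz·τ + Qw)·τ (i.e., some matrix (Qx y; Nz Qw) of determinant Q fixes a point of the upper half plane); (b) there exist integers x, y, z such that −Q²x² − Nyz = Q (i.e., W_Q can be represented by a matrix of the form (Qx y; Nz −Qx) of determinant Q). -/

import Mathlib

/-- Helper: construction of the fixed point when `N*z > 0`. -/
lemma aux_fixed_point (Q N x y z : ℤ) (hQ : 0 < Q) (hNz : 0 < N * z)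
    (hd : -(Q ^ 2 * x ^ 2) - N * y * z = Q) :
    ∃ τ : ℂ, 0 < τ.im ∧
      ((Q : ℂ) * (x : ℂ)) * τ + (y : ℂ) =
        ((N : ℂ) * (z : ℂ) * τ + (Q : ℂ) * ((-x : ℤ) : ℂ)) * τ := by
  set c : ℝ := (N : ℝ) * (z : ℝ) with hc
  have hc0 : (0 : ℝ) < c := by rw [hc]; exact_mod_cast hNz
  have hQR : (0 : ℝ) ≤ (Q : ℝ) := by positivity
  have hs : Real.sqrt Q ^ 2 = (Q : ℝ) := Real.sq_sqrt hQR
  have hsqpos : 0 < Real.sqrt Q := Real.sqrt_pos.mpr (by exact_mod_cast hQ)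
  refine ⟨⟨(Q : ℝ) * x / c, Real.sqrt Q / c⟩, by positivity, ?_⟩
  have hdR : -((Q : ℝ) ^ 2 * (x : ℝ) ^ 2) - (N : ℝ) * (y : ℝ) * (z : ℝ) = (Q : ℝ) := by
    exact_mod_cast hd
  rw [Complex.ext_iff]
  constructor
  · simp only [Complex.add_re, Complex.add_im, Complex.mul_re, Complex.mul_im, Complex.intCast_re,
      Complex.intCast_im]
    field_simp
    simp only [hc, Int.cast_neg, zero_pow two_ne_zero, mul_zero, zero_mul, sub_zero, add_zero] at *
    nlinarith [hs, hdR, sq_nonneg c]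
  · simp only [Complex.add_im, Complex.add_re, Complex.mul_re, Complex.mul_im, Complex.intCast_re,
      Complex.intCast_im]
    field_simp
    simp only [hc, Int.cast_neg]
    ring

theorem partial_AtkinLehner_fixed_point_iff_trace_zero
    (Q M : ℤ) (hQ : 3 < Q) (hM : 1 < M) (hcop : Int.gcd Q M = 1)
    (N : ℤ) (hN : N = Q * M) :
    (∃ x y z w : ℤ, ∃ τ : ℂ, Q ^ 2 * x * w - N * y * z = Q ∧ 0 < τ.im ∧
        ((Q : ℂ) * (x : ℂ)) * τ + (y : ℂ) =
          ((N : ℂ) * (z : ℂ) * τ + (Q : ℂ) * (w : ℂ)) * τ) ↔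
    (∃ x y z : ℤ, -(Q ^ 2 * x ^ 2) - N * y * z = Q) := by
  have hQ0 : (0 : ℤ) < Q := by linarith
  have hN0 : (0 : ℤ) < N := by rw [hN]; positivity
  have hQR0 : (0 : ℝ) < (Q : ℝ) := by exact_mod_cast hQ0
  constructor
  · rintro ⟨x, y, z, w, τ, hdet, him, heq⟩
    set a : ℝ := τ.re with ha
    set b : ℝ := τ.im with hb
    have hb0 : b ≠ 0 := ne_of_gt him
    have hre := congrArg Complex.re heq
    have him' := congrArg Complex.im heq
    simp only [Complex.add_re, Complex.add_im, Complex.mul_re, Complex.mul_im,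
      Complex.intCast_re, Complex.intCast_im, ← ha, ← hb] at hre him'
    have hdetR : (Q : ℝ) ^ 2 * x * w - (N : ℝ) * y * z = (Q : ℝ) := by exact_mod_cast hdet
    -- z ≠ 0
    have hz : z ≠ 0 := by
      rintro rfl
      simp only [Int.cast_zero, mul_zero, zero_mul, sub_zero, zero_sub, zero_add,
        add_zero, neg_zero] at hre him' hdet
      have hQRne : (Q : ℝ) ≠ 0 := ne_of_gt hQR0
      have hxw : (x : ℝ) = (w : ℝ) := by
        have h1 : ((Q : ℝ) * x - (Q : ℝ) * w) * b = 0 := by linear_combination him'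
        have h2 := (mul_eq_zero.mp h1).resolve_right hb0
        have h3 : (Q : ℝ) * ((x : ℝ) - w) = 0 := by linear_combination h2
        have := (mul_eq_zero.mp h3).resolve_left hQRne
        linarith
      have hxw' : x = w := by exact_mod_cast hxw
      subst hxw'
      have h4 : Q * (Q * x ^ 2) = Q * 1 := by linear_combination hdet
      have h5 : Q * x ^ 2 = 1 := mul_left_cancel₀ (ne_of_gt hQ0) h4
      have h6 : Q ∣ 1 := ⟨x ^ 2, h5.symm⟩
      have := Int.le_of_dvd one_pos h6
      linarith
    -- key real identity
    have hA : (Q : ℝ) * ((x : ℝ) - w) = 2 * (N : ℝ) * z * a := by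
      have h1 : ((Q : ℝ) * ((x : ℝ) - w) - 2 * (N : ℝ) * z * a) * b = 0 := by
        linear_combination him'
      have h2 := (mul_eq_zero.mp h1).resolve_right hb0
      linarith
    have hy : (N : ℝ) * z * y = -((N : ℝ) * z * a) ^ 2 - ((N : ℝ) * z * b) ^ 2 := by
      linear_combination ((N : ℝ) * z) * hre - ((N : ℝ) * z * a) * hA
    have hkey : (Q : ℝ) ^ 2 * ((x : ℝ) + w) ^ 2 + 4 * ((N : ℝ) * z * b) ^ 2 = 4 * Q := by
      linear_combination 4 * hdetR + 4 * hy + ((Q : ℝ) * ((x : ℝ) - w) + 2 * (N : ℝ) * z * a) * hA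
    have hNzb : ((N : ℝ) * z * b) ≠ 0 := by
      have hNR : (N : ℝ) ≠ 0 := by exact_mod_cast hN0.ne'
      have hzR : (z : ℝ) ≠ 0 := by exact_mod_cast hz
      positivity
    have hlt : (Q : ℝ) * ((x : ℝ) + w) ^ 2 < 4 := by
      nlinarith [hkey, pow_pos (abs_pos.mpr hNzb) 2, sq_abs ((N : ℝ) * z * b), sq_nonneg ((x : ℝ) + w)]
    have hltZ : Q * (x + w) ^ 2 < 4 := by exact_mod_cast hlt
    have h1 : (x + w) ^ 2 ≤ 0 := by
      by_contra h
      push_neg at h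
      have h2 : 1 ≤ (x + w) ^ 2 := h
      nlinarith
    have h0 : (x + w) ^ 2 = 0 := le_antisymm h1 (sq_nonneg _)
    have hxw : x + w = 0 := by
      have := pow_eq_zero_iff (n := 2) (by norm_num) |>.mp h0
      exact this
    exact ⟨x, y, z, by linear_combination hdet - Q ^ 2 * x * hxw⟩
  · rintro ⟨x, y, z, hd⟩
    have hz : z ≠ 0 := by
      rintro rfl
      simp only [mul_zero] at hd
      nlinarith [sq_nonneg (Q * x)]
    rcases hz.lt_or_gt with hzneg | hzpos
    · obtain ⟨τ, h1, h2⟩ := aux_fixed_point Q N x (-y) (-z) hQ0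
        (by nlinarith) (by linear_combination hd)
      refine ⟨x, -y, -z, -x, τ, by linear_combination hd, h1, ?_⟩
      push_cast at h2 ⊢
      linear_combination h2
    · obtain ⟨τ, h1, h2⟩ := aux_fixed_point Q N x y z hQ0 (by positivity) hd
      refine ⟨x, y, z, -x, τ, by linear_combination hd, h1, ?_⟩
      push_cast at h2 ⊢
      linear_combination h2
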